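/- For all real numbers a, b and angles α satisfying π/4 < α < π/2, 1 ≤ a ≤ b, and b ≤ a·cos α + (1/a)·sin α: min( (a+b)²/(2ab(1+cos α)), (1+ab)²/(2ab(1+sin α)) ) ≤ 5/4. -/

import Mathlib

open Real

set_option maxHeartbeats 1000000 in
private lemma obb_caseA (c s t : ℝ) (h1 : c^2 + s^2 = 1) (hc : 3/5 ≤ c) (hc2 : 2*c^2 < 1)
    (hs : 3/5 < s) (hs4 : s ≤ 4/5)
    (ht1 : 1 ≤ t) (ht2 : t ≤ c + s) (hphi : (5*c+1)*t < 2*t^2 + 2) :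
    2*s^2*t^2 + 2*(t-c)^2 ≤ (5*s+1)*s*t*(t-c) := by
  nlinarith [mul_nonneg (sub_nonneg.2 ht1) (le_of_lt (sub_pos.2 hphi)),
    mul_nonneg (sub_nonneg.2 ht2) (le_of_lt (sub_pos.2 hphi)),
    mul_nonneg (mul_nonneg (sub_nonneg.2 ht1) (sub_nonneg.2 ht1)) (sub_nonneg.2 hs4),
    mul_nonneg (sub_nonneg.2 ht1) (sub_nonneg.2 hc),
    sq_nonneg (t-1), sq_nonneg (c+s-t), mul_nonneg (sub_nonneg.2 hc) (sub_nonneg.2 hs4),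
    sub_pos.2 hphi]

set_option maxHeartbeats 1000000 in
private lemma obb_case1 (a b c s : ℝ) (h1 : c^2 + s^2 = 1) (hc : 0 < c) (hs1 : s < 1)
    (hs4 : 4/5 ≤ s) (ha : 1 ≤ a) (hab : a ≤ b) (h3 : a*b ≤ a^2*c + s)
    (h2 : 5*(2*a*b*(1+s)) < 4*(1+a*b)^2) : False := by
  have hc1 : c < 1 := by nlinarith
  have h4 : a^2*(1-c) ≤ s := by nlinarith
  have h5 : a*b*(1-c) ≤ s := by
    nlinarith [mul_nonneg (sub_nonneg.2 (by linarith : a*b - s ≤ a^2*c)) (by linarith : (0:ℝ) ≤ 1-c)]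
  have hu1 : 1 ≤ a*b := by nlinarith
  nlinarith [mul_nonneg (sub_nonneg.2 hu1) (sub_nonneg.2 h5),
    mul_nonneg (sub_nonneg.2 hu1) (by linarith : (0:ℝ) ≤ 1-c),
    mul_nonneg (by linarith : (0:ℝ) ≤ 5*s-3) (sub_nonneg.2 h5),
    mul_nonneg (mul_nonneg (by nlinarith : (0:ℝ) ≤ 5*s^2+s-4) (by linarith : (0:ℝ) ≤ 1-c)) (sub_nonneg.2 hu1),
    sq_nonneg (a*b-1), mul_pos (lt_of_lt_of_le one_pos hu1) (by linarith : (0:ℝ) < 1-c)]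

set_option maxHeartbeats 1000000 in
private lemma obb_case2 (a b c s : ℝ) (hc : 0 < c) (hc1 : c < 1) (hs3 : 3 < 5*s)
    (ha : 1 ≤ a) (hab : a ≤ b) (hd : 0 < b - a*c)
    (had : a*(b - a*c) ≤ s)
    (hG : 2*s^2*b^2 + 2*(b - a*c)^2 ≤ (5*s+1)*s*b*(b - a*c))
    (h2 : 5*(2*a*b*(1+s)) < 4*(1+a*b)^2) : False := by
  have b0 : 0 < b := by linarith
  have hu1 : 1 ≤ a*b := by nlinarith
  have hBud : (a*b)*(b-a*c) ≤ s*b := by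
    nlinarith [mul_nonneg (by linarith : (0:ℝ) ≤ s - a*(b-a*c)) b0.le]
  have hBd2 : b - a*c ≤ s*b := by nlinarith [mul_nonneg (sub_nonneg.2 hu1) hd.le]
  have hpsi : 0 < 2*(a*b)^2 - (5*s+1)*(a*b) + 2 := by nlinarith
  rcases eq_or_lt_of_le hBd2 with heq | hlt
  · have hu : a*b ≤ 1 := by nlinarith
    nlinarith
  · nlinarith [mul_pos (mul_pos hpsi (sub_pos.2 hlt)) hd,
      mul_nonneg (mul_nonneg (by linarith : (0:ℝ) ≤ 5*s-3) (sub_nonneg.2 hBud)) hd.le,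
      mul_nonneg (sub_nonneg.2 hu1) (sub_nonneg.2 hG),
      mul_nonneg (mul_nonneg (sub_nonneg.2 hu1) (sub_nonneg.2 hBud)) (sub_nonneg.2 hBd2)]

set_option maxHeartbeats 1000000 in
/-- For `π/4 < α < π/2`, `1 ≤ a ≤ b` and `b ≤ a cos α + (1/a) sin α`, the minimum
of the two intermediate bounding-box areas (counterclockwise and clockwise rotation)
is at most `5/4`. -/
theorem stmt_5 (a b α : ℝ) (hα₀ : π / 4 < α) (hα₁ : α < π / 2)
    (ha : 1 ≤ a) (hab : a ≤ b)
    (hdiag : b ≤ a * Real.cos α + (1 / a) * Real.sin α) :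
    min ((a + b) ^ 2 / (2 * a * b * (1 + Real.cos α)))
        ((1 + a * b) ^ 2 / (2 * a * b * (1 + Real.sin α))) ≤ 5 / 4 := by
  have pip : (0:ℝ) < π := pi_pos
  set c := Real.cos α with hcdef
  set s := Real.sin α with hsdef
  have hα0' : 0 < α := by linarith
  have hs0 : 0 < s := sin_pos_of_pos_of_lt_pi hα0' (by linarith)
  have hc0 : 0 < c := cos_pos_of_mem_Ioo ⟨by linarith, hα₁⟩
  have hpyth : c^2 + s^2 = 1 := by
    rw [hcdef, hsdef]; exact cos_sq_add_sin_sq α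
  have hs1 : s < 1 := by nlinarith
  have hcs : c < s := by
    have h1 : c = Real.sin (π/2 - α) := (Real.sin_pi_div_two_sub α).symm
    rw [h1, hsdef]
    apply Real.strictMonoOn_sin ⟨by linarith, by linarith⟩ ⟨by linarith, le_of_lt hα₁⟩
    linarith
  have hc1 : c < 1 := by linarith
  have a0 : 0 < a := by linarith
  have b0 : 0 < b := by linarith
  have ha' : a ≠ 0 := ne_of_gt a0
  have h3 : a*b ≤ a^2*c + s := by
    have h := mul_le_mul_of_nonneg_left hdiag a0.le
    have e : a*((1/a)*s) = s := by field_simp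
    nlinarith [h, e]
  by_contra hcon
  push_neg at hcon
  rw [lt_min_iff] at hcon
  obtain ⟨hm1, hm2⟩ := hcon
  have hD1 : (0:ℝ) < 2*a*b*(1+c) := by positivity
  have hD2 : (0:ℝ) < 2*a*b*(1+s) := by positivity
  have h1 : 5*(2*a*b*(1+c)) < 4*(a+b)^2 := by
    rw [div_lt_div_iff₀ (by norm_num) hD1] at hm1; linarith
  have h2 : 5*(2*a*b*(1+s)) < 4*(1+a*b)^2 := by
    rw [div_lt_div_iff₀ (by norm_num) hD2] at hm2; linarith
  rcases le_or_gt (4/5 : ℝ) s with hs4 | hs4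
  · exact obb_case1 a b c s hpyth hc0 hs1 hs4 ha hab h3 h2
  · have hc2 : 2*c^2 < 1 := by nlinarith
    have hs3 : 3/5 < s := by nlinarith
    have hc35 : 3/5 ≤ c := by nlinarith [mul_pos (by linarith : (0:ℝ) < c + 3/5) hc0]
    have ht1 : 1 ≤ b/a := (one_le_div a0).mpr hab
    have ht2 : b/a ≤ c + s := by
      rw [div_le_iff₀ a0]
      nlinarith [mul_nonneg hs0.le (by nlinarith : (0:ℝ) ≤ a^2 - 1)]
    have hkey : (5*c+1)*(a*b) < 2*a^2 + 2*b^2 := by nlinarith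
    have ha2 : (0:ℝ) < a^2 := by positivity
    have hphi : (5*c+1)*(b/a) < 2*(b/a)^2 + 2 := by
      rw [show (5*c+1)*(b/a) = ((5*c+1)*(a*b))/a^2 by field_simp,
          show 2*(b/a)^2 + 2 = (2*a^2+2*b^2)/a^2 by field_simp; ring]
      exact (div_lt_div_iff_of_pos_right ha2).mpr hkey
    have hF := obb_caseA c s (b/a) hpyth hc35 hc2 hs3 (by linarith) ht1 ht2 hphi
    have hG : 2*s^2*b^2 + 2*(b - a*c)^2 ≤ (5*s+1)*s*b*(b - a*c) := by
      have h := mul_le_mul_of_nonneg_right hF ha2.le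
      have e1 : (2*s^2*(b/a)^2 + 2*(b/a-c)^2)*a^2 = 2*s^2*b^2 + 2*(b - a*c)^2 := by
        have hba : b/a*a = b := div_mul_cancel₀ b ha'
        linear_combination (2*s^2*(b/a*a + b) + 2*(b/a*a + b - 2*c*a)) * hba
      have e2 : ((5*s+1)*s*(b/a)*(b/a-c))*a^2 = (5*s+1)*s*b*(b - a*c) := by
        have hba : b/a*a = b := div_mul_cancel₀ b ha'
        linear_combination ((5*s+1)*s*(b/a*a + b - c*a)) * hba
      rw [e1, e2] at h; exact h
    have hd : 0 < b - a*c := by nlinarith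
    have had : a*(b - a*c) ≤ s := by nlinarith
    exact obb_case2 a b c s hc0 hc1 (by linarith) ha hab hd had hG h2
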